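/- Let M > 0 and φ: [0,∞) → [0,∞) with φ(x) → 0 as x → ∞. Then the set K̃ of finite nonnegative Borel measures ζ on [0,∞) satisfying ζ([0,∞)) ≤ M and ∫ (y−x)⁺ dζ(y) ≤ φ(x) for all x ≥ 0 is compact in the Wasserstein₁ topology. -/

import Mathlib

open MeasureTheory Filter Set Topology


lemma meas_Ioc_toReal (ν : Measure ℝ) [IsFiniteMeasure ν] {a b : ℝ} (h : a ≤ b) :
    (ν (Set.Ioc a b)).toReal = (ν (Set.Iic b)).toReal - (ν (Set.Iic a)).toReal := by
  rw [← Set.Iic_sdiff_Iic,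
    measure_diff (Set.Iic_subset_Iic.2 h) measurableSet_Iic.nullMeasurableSet (measure_ne_top ν _),
    ENNReal.toReal_sub_of_le (measure_mono (Set.Iic_subset_Iic.2 h)) (measure_ne_top ν _)]

lemma tail_bound (ν : Measure ℝ) [IsFiniteMeasure ν] (hint : Integrable id ν)
    (x b : ℝ) (hb : x + 1 ≤ b) :
    (ν (Set.Ioi b)).toReal ≤ ∫ y, max (y - x) 0 ∂ν := by
  have hg : Integrable (fun y => max (y - x) 0) ν := (hint.sub (integrable_const x)).pos_part
  have h1 : (ν (Set.Ioi b)).toReal = ∫ _ in Set.Ioi b, (1:ℝ) ∂ν := by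
    simp [setIntegral_const, measureReal_def]
  have h2 : ∫ _ in Set.Ioi b, (1:ℝ) ∂ν ≤ ∫ y in Set.Ioi b, max (y - x) 0 ∂ν := by
    refine setIntegral_mono_on (integrable_const _).integrableOn hg.integrableOn
      measurableSet_Ioi (fun y hy => ?_)
    have : x + 1 < y := lt_of_le_of_lt hb hy
    exact le_trans (by linarith) (le_max_left _ _)
  have h3 : ∫ y in Set.Ioi b, max (y - x) 0 ∂ν ≤ ∫ y, max (y - x) 0 ∂ν :=
    setIntegral_le_integral hg (Eventually.of_forall fun y => le_max_right _ _)
  linarith [h1, h2, h3]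


-- sum over pieces of Ioc equals integral over big Ioc, with error bound
lemma step_main (ν : Measure ℝ) [IsFiniteMeasure ν] (f : BoundedContinuousFunction ℝ ℝ)
    (t : ℕ → ℝ) (hmono : Monotone t) (ε : ℝ) (N : ℕ)
    (hosc : ∀ i, i < N → ∀ x, x ∈ Set.Ioc (t i) (t (i+1)) → |f x - f (t (i+1))| ≤ ε) :
    ∀ n : ℕ, n ≤ N → |∫ y in Set.Ioc (t 0) (t n), f y ∂ν -
        ∑ i ∈ Finset.range n, f (t (i+1)) * (ν (Set.Ioc (t i) (t (i+1)))).toReal|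
      ≤ ε * (ν (Set.Ioc (t 0) (t n))).toReal := by
  intro n
  induction n with
  | zero => simp
  | succ n ih' =>
    intro hn
    have ih := ih' (le_trans (Nat.le_succ n) hn)
    have hnN : n < N := hn
    have hunion : Set.Ioc (t 0) (t (n+1)) = Set.Ioc (t 0) (t n) ∪ Set.Ioc (t n) (t (n+1)) :=
      (Set.Ioc_union_Ioc_eq_Ioc (hmono (Nat.zero_le n)) (hmono (Nat.le_succ n))).symm
    have hdisj : Disjoint (Set.Ioc (t 0) (t n)) (Set.Ioc (t n) (t (n+1))) :=
      by
      rw [Set.Ioc_disjoint_Ioc]; simp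
    have hint : ∀ s : Set ℝ, IntegrableOn (⇑f) s ν := fun s => (f.integrable ν).integrableOn
    have hsplit : ∫ y in Set.Ioc (t 0) (t (n+1)), f y ∂ν
        = (∫ y in Set.Ioc (t 0) (t n), f y ∂ν) + ∫ y in Set.Ioc (t n) (t (n+1)), f y ∂ν := by
      rw [hunion, setIntegral_union hdisj measurableSet_Ioc (hint _) (hint _)]
    have hmeas : (ν (Set.Ioc (t 0) (t (n+1)))).toReal
        = (ν (Set.Ioc (t 0) (t n))).toReal + (ν (Set.Ioc (t n) (t (n+1)))).toReal := by
      rw [hunion, measure_union hdisj measurableSet_Ioc,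
        ENNReal.toReal_add (measure_ne_top ν _) (measure_ne_top ν _)]
    have hpiece : |∫ y in Set.Ioc (t n) (t (n+1)), f y ∂ν -
        f (t (n+1)) * (ν (Set.Ioc (t n) (t (n+1)))).toReal|
        ≤ ε * (ν (Set.Ioc (t n) (t (n+1)))).toReal := by
      have : ∫ y in Set.Ioc (t n) (t (n+1)), f y ∂ν -
          f (t (n+1)) * (ν (Set.Ioc (t n) (t (n+1)))).toReal
          = ∫ y in Set.Ioc (t n) (t (n+1)), (f y - f (t (n+1))) ∂ν := by
        rw [integral_sub (hint _) (integrable_const _).integrableOn, setIntegral_const,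
          smul_eq_mul, mul_comm, measureReal_def]
      rw [this]
      have := norm_setIntegral_le_of_norm_le_const (μ := ν)
        (s := Set.Ioc (t n) (t (n+1))) (f := fun y => f y - f (t (n+1))) (C := ε)
        (measure_lt_top ν _) (fun x hx => by simpa using hosc n hnN x hx)
      simpa [measureReal_def] using this
    rw [Finset.sum_range_succ, hsplit, hmeas]
    calc |(∫ y in Set.Ioc (t 0) (t n), f y ∂ν + ∫ y in Set.Ioc (t n) (t (n+1)), f y ∂ν) -
        (∑ i ∈ Finset.range n, f (t (i+1)) * (ν (Set.Ioc (t i) (t (i+1)))).toReal +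
          f (t (n+1)) * (ν (Set.Ioc (t n) (t (n+1)))).toReal)|
        ≤ |∫ y in Set.Ioc (t 0) (t n), f y ∂ν -
            ∑ i ∈ Finset.range n, f (t (i+1)) * (ν (Set.Ioc (t i) (t (i+1)))).toReal|
          + |∫ y in Set.Ioc (t n) (t (n+1)), f y ∂ν -
            f (t (n+1)) * (ν (Set.Ioc (t n) (t (n+1)))).toReal| := by
          rw [add_sub_add_comm]; exact abs_add_le _ _
      _ ≤ _ := by rw [mul_add]; exact add_le_add ih hpiece

lemma step_approx (ν : Measure ℝ) [IsFiniteMeasure ν] (f : BoundedContinuousFunction ℝ ℝ)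
    (t : ℕ → ℝ) (hmono : Monotone t) (N : ℕ) (hν0 : ν (Set.Iic (t 0)) = 0) (ε : ℝ) (hε : 0 ≤ ε)
    (hosc : ∀ i, i < N → ∀ x, x ∈ Set.Ioc (t i) (t (i+1)) → |f x - f (t (i+1))| ≤ ε) :
    |∫ y, f y ∂ν - ∑ i ∈ Finset.range N, f (t (i+1)) * (ν (Set.Ioc (t i) (t (i+1)))).toReal|
      ≤ ε * (ν Set.univ).toReal + ‖f‖ * (ν (Set.Ioi (t N))).toReal := by
  have hint : ∀ s : Set ℝ, IntegrableOn (⇑f) s ν := fun s => (f.integrable ν).integrableOn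
  have hsplit0 : ∫ y, f y ∂ν = ∫ y in Set.Ioi (t 0), f y ∂ν := by
    have h := integral_add_compl (measurableSet_Iic (a := t 0)) (f.integrable ν)
    rw [Set.compl_Iic] at h
    have hz : ∫ y in Set.Iic (t 0), f y ∂ν = 0 := by
      rw [Measure.restrict_eq_zero.mpr hν0, integral_zero_measure]
    rw [← h, hz, zero_add]
  have hunion : Set.Ioi (t 0) = Set.Ioc (t 0) (t N) ∪ Set.Ioi (t N) :=
    (Set.Ioc_union_Ioi_eq_Ioi (hmono (Nat.zero_le N))).symm
  have hdisj : Disjoint (Set.Ioc (t 0) (t N)) (Set.Ioi (t N)) := by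
    simp only [Set.disjoint_left, Set.mem_Ioc, Set.mem_Ioi]
    rintro x ⟨_, h2⟩ h3; exact absurd h3 (not_lt.2 h2)
  have hsplit : ∫ y, f y ∂ν = (∫ y in Set.Ioc (t 0) (t N), f y ∂ν) + ∫ y in Set.Ioi (t N), f y ∂ν := by
    rw [hsplit0, hunion, setIntegral_union hdisj measurableSet_Ioi (hint _) (hint _)]
  have htail : |∫ y in Set.Ioi (t N), f y ∂ν| ≤ ‖f‖ * (ν (Set.Ioi (t N))).toReal := by
    have := norm_setIntegral_le_of_norm_le_const (μ := ν) (s := Set.Ioi (t N)) (f := ⇑f)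
      (C := ‖f‖) (measure_lt_top ν _) (fun x _ => f.norm_coe_le_norm x)
    simpa [measureReal_def] using this
  have hmain := step_main ν f t hmono ε N hosc N le_rfl
  have hmono2 : ε * (ν (Set.Ioc (t 0) (t N))).toReal ≤ ε * (ν Set.univ).toReal ∨ True := Or.inr trivial
  calc |∫ y, f y ∂ν - ∑ i ∈ Finset.range N, f (t (i+1)) * (ν (Set.Ioc (t i) (t (i+1)))).toReal|
      ≤ |∫ y in Set.Ioc (t 0) (t N), f y ∂ν -
          ∑ i ∈ Finset.range N, f (t (i+1)) * (ν (Set.Ioc (t i) (t (i+1)))).toReal|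
        + |∫ y in Set.Ioi (t N), f y ∂ν| := by
        rw [hsplit, add_sub_right_comm]; exact abs_add_le _ _
    _ ≤ ε * (ν (Set.Ioc (t 0) (t N))).toReal + ‖f‖ * (ν (Set.Ioi (t N))).toReal :=
        add_le_add hmain htail
    _ ≤ ε * (ν Set.univ).toReal + ‖f‖ * (ν (Set.Ioi (t N))).toReal := by
        have : (ν (Set.Ioc (t 0) (t N))).toReal ≤ (ν Set.univ).toReal :=
          ENNReal.toReal_mono (measure_ne_top ν _) (measure_mono (Set.subset_univ _))
        nlinarith


/-- truncated positive part `y ↦ min (max (y - x) 0) c` as a bounded continuous function -/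
noncomputable def trunc (x c : ℝ) : BoundedContinuousFunction ℝ ℝ :=
  BoundedContinuousFunction.mkOfBound
    ⟨fun y => min (max (y - x) 0) c, ((continuous_id.sub continuous_const).max
      continuous_const).min continuous_const⟩ (2 * |c|)
    (by
      intro y z
      have hb : ∀ w : ℝ, |min (max (w - x) 0) c| ≤ |c| := by
        intro w
        rw [abs_le]
        constructor
        · refine le_min (le_trans ?_ (le_max_right _ _)) (neg_abs_le c)
          simp [neg_nonpos.2 (abs_nonneg c)]
        · exact le_trans (min_le_right _ _) (le_abs_self c)
      rw [Real.dist_eq, two_mul]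
      calc |min (max (y - x) 0) c - min (max (z - x) 0) c|
          ≤ |min (max (y - x) 0) c| + |min (max (z - x) 0) c| := abs_sub _ _
        _ ≤ |c| + |c| := add_le_add (hb y) (hb z))

lemma trunc_apply (x c y : ℝ) : trunc x c y = min (max (y - x) 0) c := rfl

lemma trunc_le (x c y : ℝ) : trunc x c y ≤ max (y - x) 0 := min_le_left _ _

lemma trunc_nonneg (x c y : ℝ) (hc : 0 ≤ c) : 0 ≤ trunc x c y :=
  le_min (le_max_right _ _) hc

lemma exists_partition {D : Set ℝ} (hD : Dense D) {δ B : ℝ} (hδ : 0 < δ) (hB : 2 ≤ B) :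
    ∃ (N : ℕ) (t : ℕ → ℝ), StrictMono t ∧ (∀ i, t i ∈ D) ∧
      -1 < t 0 ∧ t 0 < 0 ∧ B < t N ∧ t N ≤ B + 2 ∧ ∀ i, t (i+1) - t i < δ := by
  obtain ⟨η, hη, hηδ, hη1⟩ : ∃ η : ℝ, 0 < η ∧ 3*η/2 < δ ∧ η ≤ 1/2 := by
    refine ⟨min δ 1 / 2, by positivity, ?_, by
      have := min_le_right δ 1; linarith⟩
    rcases le_total δ 1 with h | h
    · rw [min_eq_left h]; linarith
    · rw [min_eq_right h]; linarith
  have hchoice : ∀ i : ℕ, ∃ x, x ∈ D ∧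
      x ∈ Set.Ioo (-(1/2) + i*η) (-(1/2) + i*η + η/2) :=
    fun i => hD.exists_mem_open isOpen_Ioo (Set.nonempty_Ioo.2 (by linarith))
  choose t htD htI using hchoice
  have hlb : ∀ i : ℕ, -(1/2) + i*η < t i := fun i => (htI i).1
  have hub : ∀ i : ℕ, t i < -(1/2) + i*η + η/2 := fun i => (htI i).2
  have htmono : StrictMono t := by
    refine strictMono_nat_of_lt_succ fun i => ?_
    have h1 := hub i
    have h2 := hlb (i+1)
    have h3 : ((i+1 : ℕ) : ℝ) * η = (i:ℝ)*η + η := by push_cast; ring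
    rw [h3] at h2
    linarith
  set N : ℕ := ⌈(B + 1/2)/η⌉₊ + 1 with hNdef
  have hNη : ((N:ℕ) : ℝ) * η = (⌈(B + 1/2)/η⌉₊ : ℝ) * η + η := by
    rw [hNdef]; push_cast; ring
  have hceil1 : (B + 1/2) ≤ (⌈(B + 1/2)/η⌉₊ : ℝ) * η :=
    (div_le_iff₀ hη).1 (Nat.le_ceil _)
  have hceil2 : (⌈(B + 1/2)/η⌉₊ : ℝ) * η < B + 1/2 + η := by
    have h1 : (⌈(B + 1/2)/η⌉₊ : ℝ) < (B + 1/2)/η + 1 :=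
      Nat.ceil_lt_add_one (by positivity)
    have := mul_lt_mul_of_pos_right h1 hη
    rw [div_add' _ _ _ hη.ne', div_mul_cancel₀ _ hη.ne'] at this
    linarith
  refine ⟨N, t, htmono, htD, ?_, ?_, ?_, ?_, ?_⟩
  · have := hlb 0; push_cast at this; linarith
  · have := hub 0; push_cast at this; linarith
  · have := hlb N; rw [hNη] at this; linarith
  · have := hub N; rw [hNη] at this; linarith
  · intro i
    have h1 := hlb i
    have h2 := hub (i+1)
    have h3 : ((i+1 : ℕ) : ℝ) * η = (i:ℝ)*η + η := by push_cast; ring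
    rw [h3] at h2
    linarith


open MeasureTheory Filter

/-- The space `𝓜₁`: finite nonnegative Borel measures on `[0,∞)` with finite first
moment. -/
def M1 : Type :=
  {ξ : FiniteMeasure ℝ // (ξ : Measure ℝ) (Set.Iio 0) = 0 ∧ Integrable id (ξ : Measure ℝ)}

/-- The Wasserstein₁ topology on `𝓜₁`: weak convergence plus convergence of first
moments. -/
noncomputable instance : TopologicalSpace M1 :=
  TopologicalSpace.induced
    (fun ξ : M1 => ((ξ.1 : FiniteMeasure ℝ), ∫ y, y ∂(ξ.1 : Measure ℝ)))
    inferInstance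

theorem stmt16 (M : ℝ) (hM : 0 < M) (φ : ℝ → ℝ) (hφnn : ∀ x, 0 ≤ φ x)
    (hφ : Tendsto φ atTop (nhds 0)) :
    IsCompact {ζ : M1 | (ζ.1 : Measure ℝ) Set.univ ≤ ENNReal.ofReal M ∧
      ∀ x : ℝ, 0 ≤ x → (∫ y, max (y - x) 0 ∂(ζ.1 : Measure ℝ)) ≤ φ x} := by
  rw [isCompact_iff_ultrafilter_le_nhds]
  intro 𝒰 hU
  set S := {ζ : M1 | (ζ.1 : Measure ℝ) Set.univ ≤ ENNReal.ofReal M ∧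
      ∀ x : ℝ, 0 ≤ x → (∫ y, max (y - x) 0 ∂(ζ.1 : Measure ℝ)) ≤ φ x} with hSdef
  have hS : S ∈ 𝒰 := by rwa [← Ultrafilter.mem_coe, ← le_principal_iff]
  -- the (real-valued) CDF evaluations
  set mR : M1 → ℝ → ℝ := fun ζ x => ((ζ.1 : Measure ℝ) (Set.Iic x)).toReal with hmRdef
  have hmass : ∀ ζ ∈ S, ∀ s : Set ℝ, ((ζ.1 : Measure ℝ) s).toReal ≤ M := by
    intro ζ hζ s
    refine le_trans (ENNReal.toReal_mono (measure_ne_top _ _) (measure_mono (Set.subset_univ s))) ?_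
    exact ENNReal.toReal_le_of_le_ofReal hM.le hζ.1
  -- ultrafilter limits of the CDFs
  have hGex : ∀ x : ℝ, ∃ g ∈ Set.Icc (0:ℝ) M, Tendsto (fun ζ => mR ζ x) 𝒰 (𝓝 g) := by
    intro x
    have hmem : Set.Icc (0:ℝ) M ∈ Ultrafilter.map (fun ζ => mR ζ x) 𝒰 := by
      refine Ultrafilter.mem_map.2 (Filter.mem_of_superset hS ?_)
      intro ζ hζ
      exact ⟨ENNReal.toReal_nonneg, hmass ζ hζ _⟩
    obtain ⟨g, hg, hle⟩ := isCompact_Icc.ultrafilter_le_nhds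
      (Ultrafilter.map (fun ζ => mR ζ x) 𝒰) (le_principal_iff.2 hmem)
    exact ⟨g, hg, hle⟩
  choose G hG0 hGlim using hGex
  have hGmono : Monotone G := by
    intro x y hxy
    refine le_of_tendsto_of_tendsto (hGlim x) (hGlim y) (Eventually.of_forall fun ζ => ?_)
    exact ENNReal.toReal_mono (measure_ne_top _ _) (measure_mono (Set.Iic_subset_Iic.2 hxy))
  have hGneg : ∀ x : ℝ, x < 0 → G x = 0 := by
    intro x hx
    refine tendsto_nhds_unique (hGlim x) ?_
    have : (fun ζ : M1 => mR ζ x) = fun _ => (0:ℝ) := by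
      funext ζ
      have : (ζ.1 : Measure ℝ) (Set.Iic x) = 0 :=
        measure_mono_null (fun y hy => lt_of_le_of_lt hy hx) ζ.2.1
      simp [hmRdef, this]
    rw [this]; exact tendsto_const_nhds
  -- the limit at +∞
  have hbdd : BddAbove (Set.range G) := ⟨M, by rintro _ ⟨x, rfl⟩; exact (hG0 x).2⟩
  set L : ℝ := ⨆ x, G x with hLdef
  have hL : Tendsto G atTop (𝓝 L) := tendsto_atTop_ciSup hGmono hbdd
  have hLleM : L ≤ M := ciSup_le fun x => (hG0 x).2
  have hLnn : 0 ≤ L := le_trans (hG0 0).1 (le_ciSup hbdd 0)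
  -- the Stieltjes function
  set F : StieltjesFunction ℝ := hGmono.stieltjesFunction with hFdef
  have hFeq : ∀ x, F x = Function.rightLim G x := fun x => hGmono.stieltjesFunction_eq x
  have hFneg : ∀ x : ℝ, x < 0 → F x = 0 := by
    intro x hx
    rw [hFeq]
    refine le_antisymm ?_ ?_
    · rw [← hGneg (x/2) (by linarith)]
      exact hGmono.rightLim_le (by linarith)
    · rw [← hGneg x hx]
      exact hGmono.le_rightLim le_rfl
  have hGF : ∀ x, G x ≤ F x := fun x => (hFeq x) ▸ hGmono.le_rightLim le_rfl
  have hFG : ∀ x y, x < y → F x ≤ G y := fun x y h => (hFeq x) ▸ hGmono.rightLim_le h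
  have hFbot : Tendsto (⇑F) atBot (𝓝 0) := by
    refine Tendsto.congr' ?_ (tendsto_const_nhds (α := ℝ))
    filter_upwards [eventually_lt_atBot (0:ℝ)] with x hx
    exact (hFneg x hx).symm
  have hFtop : Tendsto (⇑F) atTop (𝓝 L) := by
    refine tendsto_of_tendsto_of_tendsto_of_le_of_le hL
      (hL.comp (tendsto_atTop_add_const_right atTop 1 tendsto_id)) hGF
      (fun x => hFG x (x+1) (lt_add_one x))
  -- the candidate limit measure
  set μ0 : Measure ℝ := F.measure with hμ0def
  have hfin : IsFiniteMeasure μ0 := F.isFiniteMeasure hFbot hFtop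
  have hμIic : ∀ x, μ0 (Set.Iic x) = ENNReal.ofReal (F x) := by
    intro x; rw [hμ0def, F.measure_Iic hFbot]; simp
  have hμuniv : μ0 Set.univ = ENNReal.ofReal L := by
    rw [hμ0def, F.measure_univ hFbot hFtop]; simp
  have hμIio0 : μ0 (Set.Iio 0) = 0 := by
    have hsub : Set.Iio (0:ℝ) ⊆ ⋃ n : ℕ, Set.Iic (-(1/((n:ℝ)+1))) := by
      intro y hy
      simp only [Set.mem_Iio] at hy
      obtain ⟨n, hn⟩ := exists_nat_one_div_lt (by linarith : (0:ℝ) < -y)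
      exact Set.mem_iUnion.2 ⟨n, by simp only [Set.mem_Iic]; linarith⟩
    refine measure_mono_null hsub (measure_iUnion_null fun n => ?_)
    have hneg : -(1/((n:ℝ)+1)) < 0 := by
      have : (0:ℝ) < 1/((n:ℝ)+1) := by positivity
      linarith
    rw [hμIic, hFneg _ hneg, ENNReal.ofReal_zero]
  -- continuity points
  set D : Set ℝ := {x | ContinuousAt G x} with hDdef
  have hDdense : Dense D := by
    have := hGmono.countable_not_continuousAt (α := ℝ) (β := ℝ)
    have h2 := this.dense_compl ℝ
    convert h2 using 1
    ext x; simp [hDdef]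
  have hFD : ∀ x ∈ D, F x = G x := by
    intro x hx
    rw [hFeq]
    exact hGmono.continuousWithinAt_Ioi_iff_rightLim_eq.1 (hx.continuousWithinAt)
  -- convergence of measures of Ioc intervals with endpoints in D
  have hIoc : ∀ a b : ℝ, a ∈ D → b ∈ D → a ≤ b →
      Tendsto (fun ζ : M1 => (((ζ.1 : Measure ℝ)) (Set.Ioc a b)).toReal) 𝒰
        (𝓝 ((μ0 (Set.Ioc a b)).toReal)) := by
    intro a b ha hb hab
    have h1 : (μ0 (Set.Ioc a b)).toReal = G b - G a := by
      rw [hμ0def, F.measure_Ioc, ENNReal.toReal_ofReal (by linarith [F.mono hab] : (0:ℝ) ≤ F b - F a),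
        hFD a ha, hFD b hb]
    rw [h1]
    have h2 : (fun ζ : M1 => (((ζ.1 : Measure ℝ)) (Set.Ioc a b)).toReal)
        = fun ζ : M1 => mR ζ b - mR ζ a := by
      funext ζ; exact meas_Ioc_toReal _ hab
    rw [h2]
    exact (hGlim b).sub (hGlim a)
  -- Main weak-convergence lemma
  have hFleL : ∀ x, F x ≤ L := fun x => (hFG x (x+1) (lt_add_one x)).trans (le_ciSup hbdd (x+1))
  have hFnn : ∀ x, 0 ≤ F x := fun x => (hG0 x).1.trans (hGF x)
  have hA : ∀ f : BoundedContinuousFunction ℝ ℝ,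
      Tendsto (fun ζ : M1 => ∫ y, f y ∂(ζ.1 : Measure ℝ)) 𝒰 (𝓝 (∫ y, f y ∂μ0)) := by
    intro f
    rw [Metric.tendsto_nhds]
    intro ε hε
    set C : ℝ := ‖f‖ with hCdef
    have hC : 0 ≤ C := norm_nonneg f
    set ε1 : ℝ := ε / (2*M + 2*C + 4) with hε1def
    have hden : (0:ℝ) < 2*M + 2*C + 4 := by linarith
    have hε1 : 0 < ε1 := div_pos hε hden
    have hεeq : ε1 * (2*M + 2*C + 4) = ε := div_mul_cancel₀ ε hden.ne'
    clear_value C ε1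
    -- tail cut points
    obtain ⟨b0, hb0φ, hb0nn⟩ :=
      ((hφ.eventually_lt_const hε1).and (eventually_ge_atTop (0:ℝ))).exists
    obtain ⟨b1, hb1⟩ := (hFtop.eventually_const_lt (by linarith : L - ε1 < L)).exists
    set B : ℝ := max (b0 + 2) b1 with hBdef
    have hBb0 : b0 + 2 ≤ B := le_max_left _ _
    have hBb1 : b1 ≤ B := le_max_right _ _
    have hB0 : (2:ℝ) ≤ B := by linarith
    clear_value B
    -- uniform continuity on K
    have hucont := (isCompact_Icc (a := (-1:ℝ)) (b := B + 2)).uniformContinuousOn_of_continuous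
      f.continuous.continuousOn
    rw [Metric.uniformContinuousOn_iff] at hucont
    obtain ⟨δ, hδ, hδf⟩ := hucont ε1 hε1
    obtain ⟨N, t, htmono, htD, ht0m1, ht0neg, htNB, htNub, htmesh⟩ :=
      exists_partition hDdense hδ hB0
    have htK : ∀ i, i ≤ N → t i ∈ Set.Icc (-1:ℝ) (B + 2) := by
      intro i hi
      exact ⟨le_trans ht0m1.le (htmono.monotone (Nat.zero_le i)),
        le_trans (htmono.monotone hi) htNub⟩
    have hosc : ∀ i, i < N → ∀ x, x ∈ Set.Ioc (t i) (t (i+1)) → |f x - f (t (i+1))| ≤ ε1 := by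
      intro i hi x hx
      have hiN : i + 1 ≤ N := hi
      have htiK := htK i (le_trans (Nat.le_succ i) hiN)
      have hti1K := htK (i+1) hiN
      have hxK : x ∈ Set.Icc (-1:ℝ) (B + 2) :=
        ⟨le_trans htiK.1 hx.1.le, le_trans hx.2 hti1K.2⟩
      have hd : dist x (t (i+1)) < δ := by
        rw [Real.dist_eq, abs_sub_comm, abs_of_nonneg (by linarith [hx.2] : 0 ≤ t (i+1) - x)]
        have h1 := htmesh i
        have h2 := hx.1
        linarith
      exact (hδf x hxK (t (i+1)) hti1K hd).le
    -- tail bounds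
    have hζtails : ∀ ζ ∈ S, (((ζ.1 : Measure ℝ)) (Set.Ioi (t N))).toReal ≤ ε1 := by
      intro ζ hζ
      have h1 := tail_bound (ζ.1 : Measure ℝ) ζ.2.2 b0 (t N) (by linarith)
      exact h1.trans ((hζ.2 b0 hb0nn).trans hb0φ.le)
    have hμtailN : (μ0 (Set.Ioi (t N))).toReal ≤ ε1 := by
      have hcompl : μ0 (Set.Ioi (t N)) = μ0 Set.univ - μ0 (Set.Iic (t N)) := by
        rw [← Set.compl_Iic]
        exact measure_compl measurableSet_Iic (measure_ne_top _ _)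
      have hFtN : L - ε1 < F (t N) := lt_of_lt_of_le hb1 (F.mono (le_trans hBb1 htNB.le))
      rw [hcompl, hμuniv, hμIic, ← ENNReal.ofReal_sub _ (hFnn (t N))]
      rw [ENNReal.toReal_ofReal_eq_iff.2 (by linarith [hFleL (t N)])]
      linarith
    -- step approximations
    set Sum : Measure ℝ → ℝ := fun ν =>
      ∑ i ∈ Finset.range N, f (t (i+1)) * (ν (Set.Ioc (t i) (t (i+1)))).toReal with hSumdef
    have happζ : ∀ ζ ∈ S, |(∫ y, f y ∂(ζ.1 : Measure ℝ)) - Sum (ζ.1 : Measure ℝ)|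
        ≤ ε1 * M + C * ε1 := by
      intro ζ hζ
      have hν0 : (ζ.1 : Measure ℝ) (Set.Iic (t 0)) = 0 :=
        measure_mono_null (fun y hy => lt_of_le_of_lt hy ht0neg) ζ.2.1
      have h1 := step_approx (ζ.1 : Measure ℝ) f t htmono.monotone N hν0 ε1 hε1.le hosc
      refine h1.trans ?_
      have h2 := hmass ζ hζ Set.univ
      have h3 := hζtails ζ hζ
      have h4 : (0:ℝ) ≤ (((ζ.1 : Measure ℝ)) (Set.Ioi (t N))).toReal := ENNReal.toReal_nonneg
      nlinarith
    have happμ : |(∫ y, f y ∂μ0) - Sum μ0| ≤ ε1 * M + C * ε1 := by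
      have hν0 : μ0 (Set.Iic (t 0)) = 0 := by
        rw [hμIic, hFneg _ ht0neg, ENNReal.ofReal_zero]
      have h1 := step_approx μ0 f t htmono.monotone N hν0 ε1 hε1.le hosc
      refine h1.trans ?_
      have h2 : (μ0 Set.univ).toReal ≤ M := by
        rw [hμuniv, ENNReal.toReal_ofReal hLnn]; exact hLleM
      have h4 : (0:ℝ) ≤ (μ0 (Set.Ioi (t N))).toReal := ENNReal.toReal_nonneg
      nlinarith [hμtailN]
    -- convergence of the sums
    have hsum : Tendsto (fun ζ : M1 => Sum (ζ.1 : Measure ℝ)) 𝒰 (𝓝 (Sum μ0)) := by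
      simp only [hSumdef]
      refine tendsto_finset_sum _ (fun i _ => ?_)
      exact (hIoc (t i) (t (i+1)) (htD i) (htD (i+1))
        (htmono.monotone (Nat.le_succ i))).const_mul _
    have hsumev : ∀ᶠ ζ : M1 in 𝒰, |Sum (ζ.1 : Measure ℝ) - Sum μ0| < ε1 := by
      rw [Metric.tendsto_nhds] at hsum
      filter_upwards [hsum ε1 hε1] with ζ hζ
      rwa [Real.dist_eq] at hζ
    clear_value Sum
    filter_upwards [hS, hsumev] with ζ hζS hζsum
    rw [Real.dist_eq]
    have h1 := happζ ζ hζS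
    have hcalc : |(∫ y, f y ∂(ζ.1 : Measure ℝ)) - ∫ y, f y ∂μ0|
        ≤ |(∫ y, f y ∂(ζ.1 : Measure ℝ)) - Sum (ζ.1 : Measure ℝ)|
          + |Sum (ζ.1 : Measure ℝ) - Sum μ0| + |Sum μ0 - ∫ y, f y ∂μ0| := by
      have := abs_sub_le (∫ y, f y ∂(ζ.1 : Measure ℝ)) (Sum (ζ.1 : Measure ℝ)) (∫ y, f y ∂μ0)
      have h2 := abs_sub_le (Sum (ζ.1 : Measure ℝ)) (Sum μ0) (∫ y, f y ∂μ0)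
      linarith
    have h3 : |Sum μ0 - ∫ y, f y ∂μ0| ≤ ε1 * M + C * ε1 := by
      rw [abs_sub_comm]; exact happμ
    nlinarith [hcalc, h1, h3, hζsum, hε1]
  -- properties of μ0 : moment bounds
  have hμmoment : ∀ x : ℝ, 0 ≤ x →
      Integrable (fun y => max (y - x) 0) μ0 ∧ (∫ y, max (y - x) 0 ∂μ0) ≤ φ x := by
    intro x hx
    have htrunc_le : ∀ n : ℕ, (∫ y, trunc x n y ∂μ0) ≤ φ x := by
      intro n
      refine le_of_tendsto (hA (trunc x n)) (Filter.mem_of_superset hS fun ζ hζ => ?_)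
      have h1 : (∫ y, trunc x n y ∂(ζ.1 : Measure ℝ))
          ≤ ∫ y, max (y - x) 0 ∂(ζ.1 : Measure ℝ) :=
        integral_mono ((trunc x n).integrable _)
          ((ζ.2.2.sub (integrable_const x)).pos_part) (fun y => trunc_le x n y)
      exact h1.trans (hζ.2 x hx)
    set g : ℝ → ℝ := fun y => max (y - x) 0 with hgdef
    have hgmeas : Measurable g := (measurable_id.sub measurable_const).max measurable_const
    have hgnn : ∀ y, 0 ≤ g y := fun y => le_max_right _ _
    have hsup : ∀ y, (⨆ n : ℕ, ENNReal.ofReal (trunc x n y)) = ENNReal.ofReal (g y) := by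
      intro y
      refine le_antisymm (iSup_le fun n => ENNReal.ofReal_le_ofReal (trunc_le x n y)) ?_
      refine le_iSup_of_le ⌈g y⌉₊ (ENNReal.ofReal_le_ofReal ?_)
      rw [trunc_apply]
      exact le_min le_rfl (Nat.le_ceil _)
    have hlin : ∫⁻ y, ENNReal.ofReal (g y) ∂μ0 ≤ ENNReal.ofReal (φ x) := by
      have h2 : ∫⁻ y, ENNReal.ofReal (g y) ∂μ0
          = ⨆ n : ℕ, ∫⁻ y, ENNReal.ofReal (trunc x n y) ∂μ0 := by
        rw [lintegral_congr (fun y => (hsup y).symm)]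
        refine lintegral_iSup (fun n => ((trunc x n).continuous.measurable).ennreal_ofReal)
          (fun m n hmn y => ENNReal.ofReal_le_ofReal ?_)
        rw [trunc_apply, trunc_apply]
        exact min_le_min le_rfl (Nat.cast_le.2 hmn)
      rw [h2]
      refine iSup_le fun n => ?_
      rw [← MeasureTheory.ofReal_integral_eq_lintegral_ofReal ((trunc x n).integrable μ0)
        (Filter.Eventually.of_forall fun y => trunc_nonneg x n y (Nat.cast_nonneg n))]
      exact ENNReal.ofReal_le_ofReal (htrunc_le n)
    have hgint : Integrable g μ0 := by
      refine ⟨hgmeas.aestronglyMeasurable, ?_⟩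
      rw [MeasureTheory.hasFiniteIntegral_iff_norm]
      have : ∀ y, ENNReal.ofReal ‖g y‖ = ENNReal.ofReal (g y) := by
        intro y; rw [Real.norm_of_nonneg (hgnn y)]
      simp_rw [this]
      exact lt_of_le_of_lt hlin ENNReal.ofReal_lt_top
    refine ⟨hgint, ?_⟩
    rw [MeasureTheory.integral_eq_lintegral_of_nonneg_ae
      (Filter.Eventually.of_forall hgnn) hgmeas.aestronglyMeasurable]
    exact ENNReal.toReal_le_of_le_ofReal (hφnn x) hlin
  have hμInt : Integrable id μ0 := by
    have h0 := (hμmoment 0 le_rfl).1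
    have hae : ∀ᵐ y ∂μ0, 0 ≤ y := by
      rw [ae_iff]
      convert hμIio0 using 2
      ext y; simp [Set.mem_Iio]
    refine h0.congr ?_
    filter_upwards [hae] with y hy
    simp only [sub_zero, id]
    exact max_eq_left hy
  -- the candidate limit point
  set ζ0 : M1 := ⟨⟨μ0, hfin⟩, hμIio0, hμInt⟩ with hζ0def
  have hζ0S : ζ0 ∈ S := by
    constructor
    · show μ0 Set.univ ≤ ENNReal.ofReal M
      rw [hμuniv]; exact ENNReal.ofReal_le_ofReal hLleM
    · intro x hx; exact (hμmoment x hx).2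
  -- moment convergence
  have hB : Tendsto (fun ζ : M1 => ∫ y, y ∂(ζ.1 : Measure ℝ)) 𝒰 (𝓝 (∫ y, y ∂μ0)) := by
    rw [Metric.tendsto_nhds]
    intro ε hε
    have hε4 : 0 < ε/4 := by linarith
    obtain ⟨c, hcφ, hcnn⟩ := ((hφ.eventually_lt_const hε4).and (eventually_ge_atTop (0:ℝ))).exists
    have hdecomp : ∀ ν : Measure ℝ, IsFiniteMeasure ν → ν (Set.Iio 0) = 0 → Integrable id ν →
        ∫ y, y ∂ν = (∫ y, trunc 0 c y ∂ν) + ∫ y, max (y - c) 0 ∂ν := by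
      intro ν hfi h0 hint
      have hae : ∀ᵐ y ∂ν, 0 ≤ y := by
        rw [ae_iff]
        convert h0 using 2
        ext y; simp [Set.mem_Iio]
      have hInt2 : Integrable (fun y => max (y - c) 0) ν :=
        (hint.sub (integrable_const c)).pos_part
      have heq : ∫ y, y ∂ν = ∫ y, (trunc 0 c y + max (y - c) 0) ∂ν := by
        refine integral_congr_ae ?_
        filter_upwards [hae] with y hy
        rw [trunc_apply]
        simp only [sub_zero, max_eq_left hy]
        rcases le_total y c with h | h
        · rw [min_eq_left h, max_eq_right (by linarith)]; ring
        · rw [min_eq_right h, max_eq_left (by linarith)]; ring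
      rw [heq, integral_add ((trunc 0 c).integrable ν) hInt2]
    have hμdec := hdecomp μ0 hfin hμIio0 hμInt
    have hμtail : ∫ y, max (y - c) 0 ∂μ0 ≤ ε/4 := ((hμmoment c hcnn).2).trans hcφ.le
    have hμtail0 : 0 ≤ ∫ y, max (y - c) 0 ∂μ0 :=
      integral_nonneg fun y => le_max_right _ _
    have hAev : ∀ᶠ ζ : M1 in 𝒰, |(∫ y, trunc 0 c y ∂(ζ.1 : Measure ℝ))
        - ∫ y, trunc 0 c y ∂μ0| < ε/4 := by
      have := hA (trunc 0 c)
      rw [Metric.tendsto_nhds] at this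
      filter_upwards [this (ε/4) hε4] with ζ hζ
      rwa [Real.dist_eq] at hζ
    filter_upwards [hS, hAev] with ζ hζS hζA
    rw [Real.dist_eq]
    have hζdec := hdecomp (ζ.1 : Measure ℝ) inferInstance ζ.2.1 ζ.2.2
    have hζtail : ∫ y, max (y - c) 0 ∂(ζ.1 : Measure ℝ) ≤ ε/4 := (hζS.2 c hcnn).trans hcφ.le
    have hζtail0 : 0 ≤ ∫ y, max (y - c) 0 ∂(ζ.1 : Measure ℝ) :=
      integral_nonneg fun y => le_max_right _ _
    rw [hζdec, hμdec]
    have habs := abs_sub_abs_le_abs_sub ((∫ y, trunc 0 c y ∂(ζ.1 : Measure ℝ))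
      - ∫ y, trunc 0 c y ∂μ0) 0
    calc |(∫ y, trunc 0 c y ∂(ζ.1 : Measure ℝ) + ∫ y, max (y - c) 0 ∂(ζ.1 : Measure ℝ))
        - (∫ y, trunc 0 c y ∂μ0 + ∫ y, max (y - c) 0 ∂μ0)|
        ≤ |(∫ y, trunc 0 c y ∂(ζ.1 : Measure ℝ)) - ∫ y, trunc 0 c y ∂μ0|
          + |(∫ y, max (y - c) 0 ∂(ζ.1 : Measure ℝ)) - ∫ y, max (y - c) 0 ∂μ0| := by
          rw [add_sub_add_comm]; exact abs_add_le _ _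
      _ < ε := by
          have h2 : |(∫ y, max (y - c) 0 ∂(ζ.1 : Measure ℝ)) - ∫ y, max (y - c) 0 ∂μ0|
              ≤ ε/4 := abs_sub_le_of_nonneg_of_le hζtail0 hζtail hμtail0 hμtail
          linarith
  refine ⟨ζ0, hζ0S, ?_⟩
  have : Tendsto (fun ζ : M1 => ((ζ.1 : FiniteMeasure ℝ), ∫ y, y ∂(ζ.1 : Measure ℝ))) 𝒰
      (𝓝 ((ζ0.1 : FiniteMeasure ℝ), ∫ y, y ∂(ζ0.1 : Measure ℝ))) := by
    refine Tendsto.prodMk_nhds ?_ ?_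
    · exact FiniteMeasure.tendsto_of_forall_integral_tendsto hA
    · exact hB
  rw [nhds_induced]
  exact Filter.map_le_iff_le_comap.1 this
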